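/- Fix β ∈ C_c^∞(ℝ) with supp β ⊂ (1/2, 2) and ρ ∈ C_c^∞(ℝ) with supp ρ ⊂ (1/4, 4) and ρ ≡ 1 on [1/2, 2]. For every positive integer N there is a constant C_N such that for all λ ≥ 1, all δ ∈ (0, 1/2), and all j ∈ ℤ with 2^j ≥ 1, the kernel K_j(x) = (2π)⁻² ∫_{ℝ²} m_j(|ξ|)(1 − ρ(|ξ|/λ)) e^{ix·ξ} dξ (an absolutely convergent integral) satisfies |K_j(x)| ≤ C_N (2^j λ)^{−N} for all x ∈ ℝ²; consequently the operator T_j − T̃_j, which is convolution with K_j, satisfies ‖(T_j − T̃_j) f‖_{L^∞(ℝ²)} ≤ C_N (2^j λ)^{−N} ‖f‖_{L¹(ℝ²)}. -/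

import Mathlib

open MeasureTheory RealInnerProductSpace Complex FourierTransform
open scoped ENNReal

noncomputable section

/-- The plane `ℝ²`. -/
abbrev R2 := EuclideanSpace ℝ (Fin 2)

/-- The symbol of the dyadic-in-time resolvent piece:
`m_j(τ) = (i(λ+iδ))⁻¹ ∫₀^∞ β(2^{−j}t) e^{itλ − tδ} cos(tτ) dt`. -/
noncomputable def msym (β : ℝ → ℝ) (lam δ : ℝ) (j : ℤ) (τ : ℝ) : ℂ :=
  (Complex.I * ((lam : ℂ) + Complex.I * (δ : ℂ)))⁻¹ *
    ∫ t in Set.Ioi (0:ℝ),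
      (β ((2:ℝ) ^ (-j) * t) : ℂ) *
        Complex.exp (Complex.I * ((t * lam : ℝ) : ℂ) - ((t * δ : ℝ) : ℂ)) *
        Complex.cos (((t * τ : ℝ) : ℂ))

/-- The kernel `K_j(x) = (2π)⁻² ∫ m_j(|ξ|)(1 − ρ(|ξ|/λ)) e^{ix·ξ} dξ` of the
frequency-non-localized part `T_j − T̃_j` of the dyadic resolvent piece. -/
noncomputable def Kker (β ρ : ℝ → ℝ) (lam δ : ℝ) (j : ℤ) (x : R2) : ℂ :=
  (((2 * Real.pi) ^ 2 : ℂ))⁻¹ *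
    ∫ ξ : R2, msym β lam δ j ‖ξ‖ * ((1 - ρ (‖ξ‖ / lam) : ℝ) : ℂ) *
      Complex.exp (Complex.I * ((⟪x, ξ⟫ : ℝ) : ℂ))


lemma exp_aux {ε u : ℝ} (hε : 0 ≤ ε) (hu : 1/2 ≤ u) (m : ℕ) :
    ε ^ m * Real.exp (-(ε * u)) ≤ 2 ^ m * m.factorial := by
  have h1 : Real.exp (-(ε * u)) ≤ Real.exp (-(ε/2)) := by
    apply Real.exp_le_exp.2; nlinarith
  have h2 : (ε/2) ^ m ≤ m.factorial * Real.exp (ε/2) := by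
    have := Real.pow_div_factorial_le_exp (x := ε/2) (by linarith) m
    have hf : (0:ℝ) < m.factorial := by positivity
    calc (ε/2)^m = (ε/2)^m / m.factorial * m.factorial := by
          rw [div_mul_cancel₀]; exact_mod_cast hf.ne'
    _ ≤ Real.exp (ε/2) * m.factorial := by
        apply mul_le_mul_of_nonneg_right this hf.le
    _ = m.factorial * Real.exp (ε/2) := by ring
  have h3 : ε ^ m = 2^m * (ε/2)^m := by
    rw [← mul_pow]; ring_nf
  have hepos : (0:ℝ) < Real.exp (-(ε/2)) := Real.exp_pos _
  calc ε ^ m * Real.exp (-(ε * u)) ≤ ε ^ m * Real.exp (-(ε/2)) := by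
        apply mul_le_mul_of_nonneg_left h1 (by positivity)
  _ = 2^m * ((ε/2)^m * Real.exp (-(ε/2))) := by rw [h3]; ring
  _ ≤ 2^m * (m.factorial * Real.exp (ε/2) * Real.exp (-(ε/2))) := by
        apply mul_le_mul_of_nonneg_left _ (by positivity)
        exact mul_le_mul_of_nonneg_right h2 hepos.le
  _ = 2^m * m.factorial * (Real.exp (ε/2) * Real.exp (-(ε/2))) := by ring
  _ = 2^m * m.factorial := by
        rw [← Real.exp_add]; simp

-- helper: iterated derivative of exponential

lemma iteratedDeriv_cexp_const (c : ℂ) (n : ℕ) :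
    iteratedDeriv n (fun u : ℝ => Complex.exp (c * u)) =
      fun u : ℝ => c ^ n * Complex.exp (c * u) := by
  induction n with
  | zero => simp
  | succ n ih =>
    rw [iteratedDeriv_succ, ih]
    funext u
    have h : HasDerivAt (fun u : ℝ => Complex.exp (c * u)) (Complex.exp (c * u) * c) u := by
      have h0 : HasDerivAt (fun u : ℝ => c * (u:ℂ)) c u := by
        simpa using (Complex.ofRealCLM.hasDerivAt (x := u)).const_mul c
      exact h0.cexp
    have : HasDerivAt (fun u : ℝ => c ^ n * Complex.exp (c * u))
        (c ^ n * (Complex.exp (c*u) * c)) u := h.const_mul _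
    rw [this.deriv]; ring

lemma contDiff_cexp_const (c : ℂ) : ContDiff ℝ (⊤:ℕ∞) (fun u : ℝ => Complex.exp (c * u)) :=
  Complex.contDiff_exp.comp ((contDiff_const (c := c)).mul Complex.ofRealCLM.contDiff)

lemma iteratedDeriv_zero_outside {f : ℝ → ℂ} {u : ℝ} (h : u ∉ tsupport f) (n : ℕ) :
    iteratedDeriv n f u = 0 := by
  have hopen : IsOpen (tsupport f)ᶜ := (isClosed_tsupport f).isOpen_compl
  have hev : f =ᶠ[nhds u] (fun _ => (0:ℂ)) := by
    filter_upwards [hopen.mem_nhds h] with x hx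
    exact image_eq_zero_of_notMem_tsupport hx
  rw [hev.iteratedDeriv_eq n]
  have hz : ∀ m : ℕ, iteratedDeriv m (fun _ : ℝ => (0:ℂ)) = fun _ => 0 := by
    intro m
    induction m with
    | zero => simp [iteratedDeriv_zero]
    | succ m ih => rw [iteratedDeriv_succ, ih]; funext x; simp
  rw [hz n]

lemma deriv_b_bound (β : ℝ → ℝ) (hβ : ContDiff ℝ (⊤ : ℕ∞) β)
    (hβsupp : tsupport β ⊆ Set.Ioo (1/2 : ℝ) 2) (n : ℕ) :
    ∃ B : ℝ, 0 < B ∧ ∀ ε : ℝ, 0 ≤ ε → ∀ u : ℝ,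
      ‖iteratedDeriv n (fun u : ℝ => (β u : ℂ) * Complex.exp (-(ε:ℂ) * u)) u‖ ≤ B := by
  have hβc : HasCompactSupport β := by
    apply HasCompactSupport.of_support_subset_isCompact (isCompact_Icc (a := (1/2:ℝ)) (b := 2))
    exact (subset_tsupport β).trans (hβsupp.trans Set.Ioo_subset_Icc_self)
  have hM : ∀ i : ℕ, ∃ M : ℝ, ∀ x : ℝ, ‖iteratedFDeriv ℝ i β x‖ ≤ M := by
    intro i
    exact (hβc.iteratedFDeriv i).exists_bound_of_continuous
      (hβ.continuous_iteratedFDeriv (by exact_mod_cast le_top))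
  choose M hMle using hM
  classical
  set B : ℝ := (∑ i ∈ Finset.range (n+1),
      (n.choose i : ℝ) * M i * (2 ^ (n-i) * (n-i).factorial)) + 1 with hB
  have hMnn : ∀ i, 0 ≤ M i := fun i => le_trans (norm_nonneg _) (hMle i 0)
  have hBpos : 0 < B := by
    have : 0 ≤ ∑ i ∈ Finset.range (n+1),
        (n.choose i : ℝ) * M i * (2 ^ (n-i) * (n-i).factorial) := by
      apply Finset.sum_nonneg
      intro i _
      have := hMnn i
      positivity
    linarith
  refine ⟨B, hBpos, fun ε hε u => ?_⟩
  by_cases hmem : u ∈ tsupport β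
  · have hu : (1/2:ℝ) ≤ u := (hβsupp hmem).1.le
    have hβℂ : ContDiff ℝ (⊤:ℕ∞) (fun u : ℝ => (β u : ℂ)) :=
      Complex.ofRealCLM.contDiff.comp hβ
    have h1 : ContDiff ℝ (n : WithTop ℕ∞) (fun u : ℝ => (β u : ℂ)) :=
      hβℂ.of_le (by exact_mod_cast le_top)
    have h2 : ContDiff ℝ (n : WithTop ℕ∞) (fun u : ℝ => Complex.exp (-(ε:ℂ) * u)) :=
      (contDiff_cexp_const (-(ε:ℂ))).of_le (by exact_mod_cast le_top)
    have key := norm_iteratedFDeriv_mul_le (𝕜 := ℝ) h1 h2 u le_rfl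
    rw [← norm_iteratedFDeriv_eq_norm_iteratedDeriv]
    refine le_trans key ?_
    have hterm : ∀ i ∈ Finset.range (n+1),
        (n.choose i : ℝ) * ‖iteratedFDeriv ℝ i (fun u : ℝ => (β u : ℂ)) u‖ *
          ‖iteratedFDeriv ℝ (n-i) (fun u : ℝ => Complex.exp (-(ε:ℂ) * u)) u‖ ≤
        (n.choose i : ℝ) * M i * (2 ^ (n-i) * (n-i).factorial) := by
      intro i _
      have h1 : ‖iteratedFDeriv ℝ i (fun u : ℝ => (β u : ℂ)) u‖ = ‖iteratedFDeriv ℝ i β u‖ := by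
        exact Complex.ofRealLI.norm_iteratedFDeriv_comp_left
          (hβ.of_le (by exact_mod_cast le_top : (i : WithTop ℕ∞) ≤ _)).contDiffAt le_rfl
      have h2 : ‖iteratedFDeriv ℝ (n-i) (fun u : ℝ => Complex.exp (-(ε:ℂ) * u)) u‖
          = ε ^ (n-i) * Real.exp (-(ε * u)) := by
        rw [norm_iteratedFDeriv_eq_norm_iteratedDeriv, iteratedDeriv_cexp_const]
        rw [norm_mul, norm_pow]
        have h3 : ‖(-(ε:ℂ))‖ = ε := by
          rw [norm_neg, Complex.norm_real, Real.norm_eq_abs, _root_.abs_of_nonneg hε]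
        rw [h3, Complex.norm_exp]
        congr 2
        simp
      rw [h1, h2]
      have hb1 : ‖iteratedFDeriv ℝ i β u‖ ≤ M i := hMle i u
      have hb2 : ε ^ (n-i) * Real.exp (-(ε * u)) ≤ 2 ^ (n-i) * (n-i).factorial :=
        exp_aux hε hu (n-i)
      have h2nn : (0:ℝ) ≤ ε ^ (n-i) * Real.exp (-(ε * u)) := by positivity
      exact mul_le_mul
        (mul_le_mul_of_nonneg_left hb1 (show (0:ℝ) ≤ (n.choose i : ℝ) by positivity))
        hb2 h2nn (by have := hMnn i; positivity)
    refine le_trans (Finset.sum_le_sum hterm) ?_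
    rw [hB]; linarith
  · rw [iteratedDeriv_zero_outside (fun hc => hmem ?_) n]
    · simp [hBpos.le]
    · have : tsupport (fun u : ℝ => (β u : ℂ) * Complex.exp (-(ε:ℂ) * u)) ⊆ tsupport β := by
        apply closure_minimal _ (isClosed_tsupport β)
        intro x hx
        rcases Function.mem_support.1 hx with h
        have : β x ≠ 0 := by
          intro h0; apply h; simp [h0]
        exact subset_tsupport β (Function.mem_support.2 this)
      exact this hc

lemma msym_decay (β : ℝ → ℝ) (hβ : ContDiff ℝ (⊤ : ℕ∞) β)
    (hβsupp : tsupport β ⊆ Set.Ioo (1/2 : ℝ) 2) (k : ℕ) :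
    ∃ B : ℝ, 0 < B ∧ ∀ lam : ℝ, 1 ≤ lam → ∀ δ : ℝ, 0 < δ → δ < 1/2 →
      ∀ j : ℤ, 1 ≤ (2:ℝ) ^ j → ∀ τ : ℝ, 0 ≤ τ → ¬(lam/2 ≤ τ ∧ τ ≤ 2*lam) →
      ‖msym β lam δ j τ‖ ≤ B * lam⁻¹ * (2:ℝ)^j * (((2:ℝ)^j * (lam + τ))⁻¹)^k := by
  obtain ⟨Bk, hBk, hBkle⟩ := deriv_b_bound β hβ hβsupp k
  refine ⟨2 * 6^k * Bk, by positivity, ?_⟩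
  intro lam hlam δ hδ hδ2 j hj τ hτ hloc
  set p : ℝ := (2:ℝ)^j with hpdef
  have hp0 : 0 < p := lt_of_lt_of_le one_pos hj
  have hlam0 : 0 < lam := lt_of_lt_of_le one_pos hlam
  set ε : ℝ := p * δ with hεdef
  have hε : 0 ≤ ε := by positivity
  set b : ℝ → ℂ := fun u : ℝ => (β u : ℂ) * Complex.exp (-(ε:ℂ) * u) with hbdef
  set a₀ : ℝ → ℂ := fun t : ℝ => b (p⁻¹ * t) with ha₀def
  -- basic facts about a₀
  have hb_smooth : ContDiff ℝ (⊤:ℕ∞) b :=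
    (Complex.ofRealCLM.contDiff.comp hβ).mul (contDiff_cexp_const _)
  have ha₀_smooth : ContDiff ℝ (⊤:ℕ∞) a₀ :=
    hb_smooth.comp (contDiff_const.mul contDiff_id)
  have ha₀_eq : ∀ t : ℝ, a₀ t = (β (p⁻¹ * t) : ℂ) * Complex.exp (-(δ:ℂ) * t) := by
    intro t
    simp only [ha₀def, hbdef]
    congr 2
    have hpc : (p:ℂ) ≠ 0 := by exact_mod_cast hp0.ne'
    have hεc : (ε:ℂ) = (p:ℂ) * (δ:ℂ) := by rw [hεdef]; push_cast; ring
    rw [hεc]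
    push_cast
    field_simp
  have hb_zero : ∀ u : ℝ, u ∉ Set.Icc (1/2:ℝ) 2 → b u = 0 := by
    intro u hu
    have : β u = 0 := by
      by_contra h
      exact hu (Set.Ioo_subset_Icc_self (hβsupp (subset_tsupport β (Function.mem_support.2 h))))
    simp [hbdef, this]
  have ha₀_zero : ∀ t : ℝ, t ∉ Set.Icc (p/2) (2*p) → a₀ t = 0 := by
    intro t ht
    apply hb_zero
    intro hc
    apply ht
    constructor
    · have := hc.1
      calc p/2 = p * (1/2) := by ring
      _ ≤ p * (p⁻¹ * t) := by apply mul_le_mul_of_nonneg_left this hp0.le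
      _ = t := by field_simp
    · have := hc.2
      calc t = p * (p⁻¹ * t) := by field_simp
      _ ≤ p * 2 := by apply mul_le_mul_of_nonneg_left this hp0.le
      _ = 2*p := by ring
  have ha₀_supp : HasCompactSupport a₀ := by
    apply HasCompactSupport.of_support_subset_isCompact (isCompact_Icc (a := p/2) (b := 2*p))
    intro t ht
    by_contra hc
    exact ht (ha₀_zero t hc)
  have ha₀_tsupp : tsupport a₀ ⊆ Set.Icc (p/2) (2*p) := by
    apply closure_minimal _ isClosed_Icc
    intro t ht
    by_contra hc
    exact ht (ha₀_zero t hc)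
  have hInt : ∀ n : ℕ, Integrable (iteratedDeriv n a₀) := by
    intro n
    apply Continuous.integrable_of_hasCompactSupport
    · exact ha₀_smooth.continuous_iteratedDeriv n (by exact_mod_cast le_top)
    · apply HasCompactSupport.of_support_subset_isCompact (isCompact_Icc (a := p/2) (b := 2*p))
      intro t ht
      by_contra hc
      exact ht (iteratedDeriv_zero_outside (fun hmem => hc (ha₀_tsupp hmem)) n)
  -- iterated derivative bound
  have hiter : ∀ t : ℝ, iteratedDeriv k a₀ t = (p⁻¹)^k • iteratedDeriv k b (p⁻¹ * t) := by
    intro t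
    have := iteratedDeriv_comp_const_smul (n := k) (f := b)
      (hb_smooth.of_le (by exact_mod_cast le_top)) p⁻¹
    exact congrFun this t
  have hptwise : ∀ t : ℝ, ‖iteratedDeriv k a₀ t‖ ≤ (p⁻¹)^k * Bk := by
    intro t
    rw [hiter t, norm_smul, norm_pow, Real.norm_eq_abs, abs_of_pos (inv_pos.2 hp0)]
    exact mul_le_mul_of_nonneg_left (hBkle ε hε (p⁻¹*t)) (by positivity)
  -- L¹ bound
  have hL1 : ∫ t : ℝ, ‖iteratedDeriv k a₀ t‖ ≤ 2*p * ((p⁻¹)^k * Bk) := by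
    have hzero : ∀ t : ℝ, t ∉ Set.Icc (p/2) (2*p) → ‖iteratedDeriv k a₀ t‖ = 0 := by
      intro t ht
      rw [iteratedDeriv_zero_outside (fun hc => ht (ha₀_tsupp hc)) k, norm_zero]
    rw [← setIntegral_eq_integral_of_forall_compl_eq_zero hzero]
    have hvol : volume (Set.Icc (p/2) (2*p)) < ⊤ := measure_Icc_lt_top
    have key := norm_setIntegral_le_of_norm_le_const (μ := volume) (s := Set.Icc (p/2) (2*p))
      (f := fun t => ‖iteratedDeriv k a₀ t‖)
      (C := (p⁻¹)^k * Bk) hvol (fun t _ => by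
        rw [Real.norm_eq_abs, _root_.abs_of_nonneg (norm_nonneg _)]; exact hptwise t)
    have key2 : ∫ x in Set.Icc (p/2) (2*p), ‖iteratedDeriv k a₀ x‖
        ≤ (p⁻¹)^k * Bk * (volume (Set.Icc (p/2) (2*p))).toReal := by
      refine le_trans (le_abs_self _) ?_
      rw [← Real.norm_eq_abs]
      exact key
    refine le_trans key2 ?_
    rw [Real.volume_Icc]
    have : (2*p - p/2) = 3/2 * p := by ring
    rw [this, ENNReal.toReal_ofReal (by positivity)]
    have hc : 0 ≤ p⁻¹^k * Bk := by positivity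
    nlinarith [mul_nonneg hc hp0.le]
  -- Fourier L∞ bound
  have hL1' : ∀ w : ℝ, ‖𝓕 (iteratedDeriv k a₀) w‖ ≤ 2*p * ((p⁻¹)^k * Bk) := by
    intro w
    refine le_trans (VectorFourier.norm_fourierIntegral_le_integral_norm
      Real.fourierChar volume (innerₗ ℝ) (iteratedDeriv k a₀) w) hL1
  have hFk : 𝓕 (iteratedDeriv k a₀) =
      fun x : ℝ => (2*Real.pi*Complex.I*x)^k • 𝓕 a₀ x :=
    Real.fourier_iteratedDeriv (N := (⊤:ℕ∞)) ha₀_smooth (fun n _ => hInt n)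
      (by exact_mod_cast le_top)
  have hπ : (0:ℝ) < Real.pi := Real.pi_pos
  have hGbound : ∀ s : ℝ, s ≠ 0 →
      ‖𝓕 a₀ (-s/(2*Real.pi))‖ ≤ (|s|⁻¹)^k * (2*p * ((p⁻¹)^k * Bk)) := by
    intro s hs
    have h1 := hL1' (-s/(2*Real.pi))
    rw [hFk] at h1
    rw [norm_smul, norm_pow] at h1
    have hw : ‖(2*Real.pi*Complex.I*((-s/(2*Real.pi):ℝ):ℂ))‖ = |s| := by
      rw [norm_mul, norm_mul, norm_mul]
      have n1 : ‖(2:ℂ)‖ = 2 := by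
        rw [show ((2:ℂ)) = ((2:ℝ):ℂ) by push_cast; ring, Complex.norm_real]
        simp [Real.norm_eq_abs]
      have n2 : ‖((Real.pi:ℝ):ℂ)‖ = Real.pi := by
        rw [Complex.norm_real, Real.norm_eq_abs, _root_.abs_of_pos hπ]
      have n3 : ‖((-s/(2*Real.pi):ℝ):ℂ)‖ = |s|/(2*Real.pi) := by
        rw [Complex.norm_real, Real.norm_eq_abs, abs_div, abs_neg,
          _root_.abs_of_pos (by positivity : (0:ℝ) < 2*Real.pi)]
      rw [n1, n2, n3, Complex.norm_I]
      field_simp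
    rw [hw] at h1
    have hspos : 0 < |s| := abs_pos.2 hs
    have h2 : ‖𝓕 a₀ ((-s/(2*Real.pi):ℝ))‖ = (|s|⁻¹)^k * (|s|^k * ‖𝓕 a₀ ((-s/(2*Real.pi):ℝ))‖) := by
      rw [← mul_assoc, ← mul_pow, inv_mul_cancel₀ hspos.ne', one_pow, one_mul]
    rw [h2]
    exact mul_le_mul_of_nonneg_left h1 (by positivity)
  -- geometry of the support of 1 - ρ
  have hD : 0 < lam + τ := by linarith
  have hs₁ : (lam+τ)/6 ≤ |lam + τ| := by rw [_root_.abs_of_pos hD]; linarith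
  have hs₂ : (lam+τ)/6 ≤ |lam - τ| := by
    rcases not_and_or.1 hloc with h | h
    · push_neg at h
      rw [_root_.abs_of_pos (by linarith)]
      linarith
    · push_neg at h
      rw [_root_.abs_of_neg (by linarith)]
      linarith
  have hs₁0 : lam + τ ≠ 0 := hD.ne'
  have hs₂0 : lam - τ ≠ 0 := by
    intro h
    rw [h] at hs₂
    simp only [abs_zero] at hs₂
    linarith
  -- pointwise identity for the integrand
  have hβzero : ∀ x : ℝ, x ≤ 1/2 → β x = 0 := by
    intro x hx
    by_contra h
    have := hβsupp (subset_tsupport β (Function.mem_support.2 h))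
    have := this.1
    linarith
  have hzp : (2:ℝ) ^ (-j) = p⁻¹ := by rw [hpdef, zpow_neg]
  have hIeq : ∀ t : ℝ,
      (β ((2:ℝ) ^ (-j) * t) : ℂ) *
        Complex.exp (Complex.I * ((t * lam : ℝ) : ℂ) - ((t * δ : ℝ) : ℂ)) *
        Complex.cos (((t * τ : ℝ) : ℂ))
      = (2⁻¹:ℂ) * (a₀ t * Complex.exp (Complex.I * ((t*(lam+τ) : ℝ) : ℂ))
          + a₀ t * Complex.exp (Complex.I * ((t*(lam-τ) : ℝ) : ℂ))) := by
    intro t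
    have hcos : Complex.cos (((t*τ:ℝ):ℂ)) =
        (Complex.exp ((((t*τ:ℝ)):ℂ)*Complex.I) + Complex.exp (-(((t*τ:ℝ)):ℂ)*Complex.I))/2 := by
      rw [eq_div_iff (two_ne_zero' ℂ)]
      rw [mul_comm ((Complex.cos (((t*τ:ℝ):ℂ)))) (2:ℂ), Complex.two_cos]
    have e1 : Complex.exp (Complex.I * ((t*lam:ℝ):ℂ) - ((t*δ:ℝ):ℂ)) *
        Complex.exp ((((t*τ:ℝ)):ℂ)*Complex.I)
        = Complex.exp (-(δ:ℂ)*t) * Complex.exp (Complex.I * ((t*(lam+τ):ℝ):ℂ)) := by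
      rw [← Complex.exp_add, ← Complex.exp_add]
      congr 1
      push_cast
      ring
    have e2 : Complex.exp (Complex.I * ((t*lam:ℝ):ℂ) - ((t*δ:ℝ):ℂ)) *
        Complex.exp (-(((t*τ:ℝ)):ℂ)*Complex.I)
        = Complex.exp (-(δ:ℂ)*t) * Complex.exp (Complex.I * ((t*(lam-τ):ℝ):ℂ)) := by
      rw [← Complex.exp_add, ← Complex.exp_add]
      congr 1
      push_cast
      ring
    rw [hzp, hcos, ha₀_eq t]
    calc (β (p⁻¹ * t) : ℂ) * Complex.exp (Complex.I * ((t*lam:ℝ):ℂ) - ((t*δ:ℝ):ℂ)) *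
        ((Complex.exp ((((t*τ:ℝ)):ℂ)*Complex.I) + Complex.exp (-(((t*τ:ℝ)):ℂ)*Complex.I))/2)
        = 2⁻¹ * ((β (p⁻¹*t):ℂ) * (Complex.exp (Complex.I * ((t*lam:ℝ):ℂ) - ((t*δ:ℝ):ℂ)) *
            Complex.exp ((((t*τ:ℝ)):ℂ)*Complex.I))
          + (β (p⁻¹*t):ℂ) * (Complex.exp (Complex.I * ((t*lam:ℝ):ℂ) - ((t*δ:ℝ):ℂ)) *
            Complex.exp (-(((t*τ:ℝ)):ℂ)*Complex.I))) := by ring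
    _ = 2⁻¹ * ((β (p⁻¹*t):ℂ) * (Complex.exp (-(δ:ℂ)*t) * Complex.exp (Complex.I * ((t*(lam+τ):ℝ):ℂ)))
          + (β (p⁻¹*t):ℂ) * (Complex.exp (-(δ:ℂ)*t) * Complex.exp (Complex.I * ((t*(lam-τ):ℝ):ℂ)))) := by
        rw [e1, e2]
    _ = 2⁻¹ * (((β (p⁻¹*t):ℂ) * Complex.exp (-(δ:ℂ)*t)) * Complex.exp (Complex.I * ((t*(lam+τ):ℝ):ℂ))
          + ((β (p⁻¹*t):ℂ) * Complex.exp (-(δ:ℂ)*t)) * Complex.exp (Complex.I * ((t*(lam-τ):ℝ):ℂ))) := by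
        ring
  -- integrability of the two pieces
  have hexpC : ∀ s : ℝ, Continuous (fun t : ℝ => Complex.exp (Complex.I * ((t*s:ℝ):ℂ))) := by
    intro s
    exact Complex.continuous_exp.comp (continuous_const.mul
      (Complex.continuous_ofReal.comp (continuous_id.mul continuous_const)))
  have hI12 : ∀ s : ℝ, Integrable (fun t : ℝ => a₀ t * Complex.exp (Complex.I * ((t*s:ℝ):ℂ))) := by
    intro s
    apply Continuous.integrable_of_hasCompactSupport
      (ha₀_smooth.continuous.mul (hexpC s))
    exact ha₀_supp.mul_right
  -- the Fourier identity
  have hFour : ∀ s : ℝ, (∫ t : ℝ, a₀ t * Complex.exp (Complex.I * ((t*s:ℝ):ℂ)))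
      = 𝓕 a₀ (-s/(2*Real.pi)) := by
    intro s
    rw [Real.fourier_eq']
    congr 1
    funext v
    rw [smul_eq_mul, mul_comm]
    congr 2
    simp only [RCLike.inner_apply, conj_trivial]
    have hπc : (Real.pi:ℂ) ≠ 0 := Complex.ofReal_ne_zero.mpr Real.pi_ne_zero
    push_cast
    field_simp
  -- rewrite msym
  have hmsym : msym β lam δ j τ = (Complex.I * ((lam : ℂ) + Complex.I * (δ : ℂ)))⁻¹ *
      ((2⁻¹:ℂ) * (𝓕 a₀ (-(lam+τ)/(2*Real.pi)) + 𝓕 a₀ (-(lam-τ)/(2*Real.pi)))) := by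
    rw [msym]
    congr 1
    rw [setIntegral_eq_integral_of_forall_compl_eq_zero (f := fun t =>
      (β ((2:ℝ) ^ (-j) * t) : ℂ) *
        Complex.exp (Complex.I * ((t * lam : ℝ) : ℂ) - ((t * δ : ℝ) : ℂ)) *
        Complex.cos (((t * τ : ℝ) : ℂ)))]
    · simp_rw [hIeq]
      rw [integral_const_mul, integral_add (hI12 (lam+τ)) (hI12 (lam-τ)),
        hFour (lam+τ), hFour (lam-τ)]
    · intro t ht
      simp only [Set.mem_Ioi, not_lt] at ht
      have : β ((2:ℝ) ^ (-j) * t) = 0 := by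
        apply hβzero
        rw [hzp]
        have : p⁻¹ * t ≤ 0 := mul_nonpos_of_nonneg_of_nonpos (inv_pos.2 hp0).le ht
        linarith
      rw [this]
      simp
  -- prefactor bound
  have hpref : ‖(Complex.I * ((lam : ℂ) + Complex.I * (δ : ℂ)))⁻¹‖ ≤ lam⁻¹ := by
    rw [norm_inv]
    apply inv_anti₀ hlam0
    rw [norm_mul, Complex.norm_I, one_mul]
    calc lam = ((lam : ℂ) + Complex.I * (δ : ℂ)).re := by simp
    _ ≤ |((lam : ℂ) + Complex.I * (δ : ℂ)).re| := le_abs_self _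
    _ ≤ ‖(lam : ℂ) + Complex.I * (δ : ℂ)‖ := Complex.abs_re_le_norm _
    _ = ‖(lam : ℂ) + Complex.I * (δ : ℂ)‖ := rfl
  -- bounds on the two Fourier pieces
  have hg : ∀ s : ℝ, (lam+τ)/6 ≤ |s| → s ≠ 0 →
      ‖𝓕 a₀ (-s/(2*Real.pi))‖ ≤ (6/(lam+τ))^k * (2*p * ((p⁻¹)^k * Bk)) := by
    intro s hsge hs0
    refine le_trans (hGbound s hs0) ?_
    apply mul_le_mul_of_nonneg_right _ (by positivity)
    apply pow_le_pow_left₀ (by positivity)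
    rw [show (6:ℝ)/(lam+τ) = ((lam+τ)/6)⁻¹ by rw [inv_div]]
    exact inv_anti₀ (by positivity) hsge
  -- final computation
  rw [hmsym, norm_mul]
  have hnormS : ‖(2⁻¹:ℂ) * (𝓕 a₀ (-(lam+τ)/(2*Real.pi)) + 𝓕 a₀ (-(lam-τ)/(2*Real.pi)))‖
      ≤ (6/(lam+τ))^k * (2*p * ((p⁻¹)^k * Bk)) := by
    rw [norm_mul]
    have h8 : ‖(2⁻¹:ℂ)‖ = 2⁻¹ := by
      rw [show ((2⁻¹:ℂ)) = ((2⁻¹:ℝ):ℂ) by push_cast; ring, Complex.norm_real]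
      simp [Real.norm_eq_abs]
    rw [h8]
    have := norm_add_le (𝓕 a₀ (-(lam+τ)/(2*Real.pi))) (𝓕 a₀ (-(lam-τ)/(2*Real.pi)))
    have g1 := hg (lam+τ) hs₁ hs₁0
    have g2 := hg (lam-τ) hs₂ hs₂0
    nlinarith [norm_nonneg (𝓕 a₀ (-(lam+τ)/(2*Real.pi))), norm_nonneg (𝓕 a₀ (-(lam-τ)/(2*Real.pi)))]
  calc ‖(Complex.I * ((lam : ℂ) + Complex.I * (δ : ℂ)))⁻¹‖ *
      ‖(2⁻¹:ℂ) * (𝓕 a₀ (-(lam+τ)/(2*Real.pi)) + 𝓕 a₀ (-(lam-τ)/(2*Real.pi)))‖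
      ≤ lam⁻¹ * ((6/(lam+τ))^k * (2*p * ((p⁻¹)^k * Bk))) := by
        apply mul_le_mul hpref hnormS (norm_nonneg _) (by positivity)
  _ = 2 * 6^k * Bk * lam⁻¹ * p * ((p * (lam + τ))⁻¹)^k := by
      rw [mul_inv, mul_pow]
      field_simp
      ring

lemma msym_continuous (β : ℝ → ℝ) (hβ : ContDiff ℝ (⊤ : ℕ∞) β)
    (hβsupp : tsupport β ⊆ Set.Ioo (1/2 : ℝ) 2) (lam δ : ℝ) (hδ : 0 < δ) (j : ℤ) :
    Continuous (fun τ : ℝ => msym β lam δ j τ) := by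
  unfold msym
  apply Continuous.mul continuous_const
  have hcont : ∀ τ : ℝ, Continuous (fun t : ℝ =>
      (β ((2:ℝ) ^ (-j) * t) : ℂ) *
        Complex.exp (Complex.I * ((t * lam : ℝ) : ℂ) - ((t * δ : ℝ) : ℂ)) *
        Complex.cos (((t * τ : ℝ) : ℂ))) := by
    intro τ
    apply Continuous.mul
    apply Continuous.mul
    · exact Complex.continuous_ofReal.comp (hβ.continuous.comp (continuous_const.mul continuous_id))
    · exact Complex.continuous_exp.comp (Continuous.sub
        (continuous_const.mul (Complex.continuous_ofReal.comp (continuous_id.mul continuous_const)))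
        (Complex.continuous_ofReal.comp (continuous_id.mul continuous_const)))
    · exact Complex.continuous_cos.comp (Complex.continuous_ofReal.comp
        (continuous_id.mul continuous_const))
  apply continuous_of_dominated (bound := fun t : ℝ => |β ((2:ℝ) ^ (-j) * t)|)
  · intro τ
    exact (hcont τ).aestronglyMeasurable.restrict
  · intro τ
    filter_upwards [ae_restrict_mem measurableSet_Ioi] with t ht
    rw [norm_mul, norm_mul]
    have h1 : ‖((β ((2:ℝ) ^ (-j) * t) : ℝ) : ℂ)‖ = |β ((2:ℝ) ^ (-j) * t)| := by
      rw [Complex.norm_real, Real.norm_eq_abs]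
    have h2 : ‖Complex.exp (Complex.I * ((t * lam : ℝ) : ℂ) - ((t * δ : ℝ) : ℂ))‖ ≤ 1 := by
      rw [Complex.norm_exp]
      apply Real.exp_le_one_iff.2
      have : (Complex.I * ((t * lam : ℝ) : ℂ) - ((t * δ : ℝ) : ℂ)).re = -(t*δ) := by simp
      rw [this]
      have : 0 < t := ht
      nlinarith
    have h3 : ‖Complex.cos (((t * τ : ℝ) : ℂ))‖ ≤ 1 := by
      rw [← Complex.ofReal_cos, Complex.norm_real, Real.norm_eq_abs]
      exact Real.abs_cos_le_one _
    rw [h1]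
    have s1 := mul_le_mul (mul_le_mul_of_nonneg_left h2
      (abs_nonneg (β ((2:ℝ) ^ (-j) * t)))) h3 (norm_nonneg _)
      (mul_nonneg (abs_nonneg _) zero_le_one)
    simpa using s1
  · apply Integrable.restrict
    apply Continuous.integrable_of_hasCompactSupport
    · exact (hβ.continuous.comp (continuous_const.mul continuous_id)).abs
    · apply HasCompactSupport.of_support_subset_isCompact
        (isCompact_Icc (a := ((2:ℝ)^j)/2) (b := 2*(2:ℝ)^j))
      intro t ht
      have hne : β ((2:ℝ) ^ (-j) * t) ≠ 0 := by
        intro h0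
        exact (Function.mem_support.1 ht)
          (by show |β ((2:ℝ) ^ (-j) * t)| = 0; rw [h0, abs_zero])
      have hmem := hβsupp (subset_tsupport β (Function.mem_support.2 hne))
      have hp0 : (0:ℝ) < (2:ℝ)^j := zpow_pos (by norm_num) j
      have hzp : (2:ℝ) ^ (-j) = ((2:ℝ)^j)⁻¹ := zpow_neg 2 j
      rw [hzp] at hmem
      constructor
      · have := hmem.1.le
        calc ((2:ℝ)^j)/2 = (2:ℝ)^j * (1/2) := by ring
        _ ≤ (2:ℝ)^j * (((2:ℝ)^j)⁻¹ * t) := by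
            apply mul_le_mul_of_nonneg_left _ hp0.le
            linarith
        _ = t := by field_simp
      · have := hmem.2.le
        calc t = (2:ℝ)^j * (((2:ℝ)^j)⁻¹ * t) := by field_simp
        _ ≤ (2:ℝ)^j * 2 := by apply mul_le_mul_of_nonneg_left this hp0.le
        _ = 2*(2:ℝ)^j := by ring
  · apply ae_of_all
    intro t
    apply Continuous.mul continuous_const
    exact Complex.continuous_cos.comp (Complex.continuous_ofReal.comp
      (continuous_const.mul continuous_id))

lemma arith_aux (p lam τ : ℝ) (hp : 1 ≤ p) (hl : 1 ≤ lam) (hτ : 0 ≤ τ) (N : ℕ) :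
    lam⁻¹ * p * ((p * (lam + τ))⁻¹) ^ (N+3) ≤ ((p*lam)^N)⁻¹ * ((1+τ)^3)⁻¹ := by
  have hp0 : (0:ℝ) < p := lt_of_lt_of_le one_pos hp
  have hl0 : (0:ℝ) < lam := lt_of_lt_of_le one_pos hl
  have hD : (0:ℝ) < lam + τ := by linarith
  rw [inv_pow, ← mul_inv]
  rw [show lam⁻¹ * p * ((p * (lam + τ)) ^ (N+3))⁻¹
      = p * (lam * (p * (lam + τ)) ^ (N+3))⁻¹ by rw [mul_inv]; ring]
  rw [← div_eq_mul_inv, ← one_div]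
  rw [div_le_div_iff₀ (by positivity) (by positivity)]
  calc p * ((p*lam)^N * (1+τ)^3) = p^(N+1) * lam^N * (1+τ)^3 := by rw [mul_pow]; ring
  _ ≤ p^(N+3) * (lam+τ)^N * (lam+τ)^3 := by
      apply mul_le_mul (mul_le_mul (pow_le_pow_right₀ hp (by omega))
        (pow_le_pow_left₀ hl0.le (by linarith) N) (by positivity) (by positivity))
        (pow_le_pow_left₀ (by positivity) (by linarith) 3) (by positivity) (by positivity)
  _ = (p * (lam+τ))^(N+3) := by rw [mul_pow]; ring
  _ ≤ lam * (p * (lam+τ))^(N+3) := le_mul_of_one_le_left (by positivity) hl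
  _ = 1 * (lam * (p * (lam + τ)) ^ (N+3)) := by ring

/-- Frequencies away from `|ξ| ∼ λ` contribute only `O((2^jλ)^{−∞})`:
`|K_j(x)| ≤ C_N (2^j λ)^{−N}` for all `x`, and consequently the operator `T_j − T̃_j`,
which is convolution with `K_j`, maps `L¹ → L^∞` with norm `≤ C_N (2^j λ)^{−N}`. -/
theorem statement10
    (β : ℝ → ℝ) (hβ : ContDiff ℝ (⊤ : ℕ∞) β)
    (hβsupp : tsupport β ⊆ Set.Ioo (1/2 : ℝ) 2)
    (ρ : ℝ → ℝ) (hρ : ContDiff ℝ (⊤ : ℕ∞) ρ)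
    (hρsupp : tsupport ρ ⊆ Set.Ioo (1/4 : ℝ) 4)
    (hρone : ∀ t ∈ Set.Icc (1/2 : ℝ) 2, ρ t = 1) :
    ∀ N : ℕ, 0 < N → ∃ C : ℝ, 0 < C ∧
      ∀ lam : ℝ, 1 ≤ lam → ∀ δ : ℝ, 0 < δ → δ < 1/2 →
        ∀ j : ℤ, 1 ≤ (2:ℝ) ^ j →
          (∀ x : R2, ‖Kker β ρ lam δ j x‖ ≤ C * (((2:ℝ) ^ j * lam) ^ N)⁻¹) ∧
          (∀ f : R2 → ℂ, MemLp f 1 volume →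
            eLpNorm (fun x : R2 => ∫ y : R2, Kker β ρ lam δ j (x - y) * f y) ⊤ volume
              ≤ ENNReal.ofReal (C * (((2:ℝ) ^ j * lam) ^ N)⁻¹) * eLpNorm f 1 volume) := by
  intro N hN
  obtain ⟨B, hB, hmb⟩ := msym_decay β hβ hβsupp (N+3)
  have hρc : HasCompactSupport ρ := by
    apply HasCompactSupport.of_support_subset_isCompact (isCompact_Icc (a := (1/4:ℝ)) (b := 4))
    exact (subset_tsupport ρ).trans (hρsupp.trans Set.Ioo_subset_Icc_self)
  obtain ⟨Mρ, hMρ⟩ := hρc.exists_bound_of_continuous hρ.continuous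
  have hMρ0 : 0 ≤ Mρ := le_trans (norm_nonneg _) (hMρ 0)
  have hCρ : ∀ y : ℝ, |1 - ρ y| ≤ 1 + Mρ := by
    intro y
    calc |1 - ρ y| ≤ |(1:ℝ)| + |ρ y| := abs_sub _ _
    _ ≤ 1 + Mρ := by
        have := hMρ y
        rw [Real.norm_eq_abs] at this
        simp only [abs_one]
        linarith
  have hmaj : Integrable (fun ξ : R2 => ((1+‖ξ‖)^3)⁻¹) := by
    have hfr : (Module.finrank ℝ R2 : ℝ) < 3 := by
      rw [finrank_euclideanSpace, Fintype.card_fin]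
      norm_num
    have h := integrable_one_add_norm (E := R2) (μ := volume) hfr
    apply h.congr
    apply ae_of_all
    intro ξ
    show (1+‖ξ‖) ^ (-(3:ℝ)) = ((1+‖ξ‖)^(3:ℕ))⁻¹
    rw [← Real.rpow_natCast (1+‖ξ‖) 3, ← Real.rpow_neg (by positivity)]
    norm_num
  set Iv := ∫ ξ : R2, ((1+‖ξ‖)^3)⁻¹ with hIvdef
  have hIv0 : 0 ≤ Iv := integral_nonneg (fun ξ => by positivity)
  set C := (1+Mρ) * B * Iv + 1 with hCdef
  have hC : 0 < C := by positivity
  refine ⟨C, hC, ?_⟩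
  intro lam hlam δ hδ hδ2 j hj
  have hlam0 : (0:ℝ) < lam := lt_of_lt_of_le one_pos hlam
  set p := (2:ℝ)^j with hpdef
  have hp0 : (0:ℝ) < p := lt_of_lt_of_le one_pos hj
  set R := ((p*lam)^N)⁻¹ with hRdef
  have hR0 : (0:ℝ) < R := by positivity
  -- pointwise bound on the integrand
  have hpt : ∀ (x ξ : R2), ‖msym β lam δ j ‖ξ‖ * ((1 - ρ (‖ξ‖/lam) : ℝ) : ℂ) *
      Complex.exp (Complex.I * ((⟪x,ξ⟫ : ℝ) : ℂ))‖ ≤ ((1+Mρ) * B * R) * ((1+‖ξ‖)^3)⁻¹ := by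
    intro x ξ
    rw [norm_mul, norm_mul]
    have hexp1 : ‖Complex.exp (Complex.I * ((⟪x,ξ⟫ : ℝ) : ℂ))‖ = 1 := by
      rw [Complex.norm_exp]
      simp
    rw [hexp1, mul_one]
    by_cases hone : ρ (‖ξ‖/lam) = 1
    · rw [hone]
      simp only [sub_self]
      rw [show ((0:ℝ):ℂ) = 0 by norm_num]
      rw [norm_zero, mul_zero]
      positivity
    · have hnotin : ‖ξ‖/lam ∉ Set.Icc (1/2:ℝ) 2 := fun hc => hone (hρone _ hc)
      have hloc : ¬(lam/2 ≤ ‖ξ‖ ∧ ‖ξ‖ ≤ 2*lam) := by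
        rintro ⟨h1,h2⟩
        apply hnotin
        constructor
        · rw [le_div_iff₀ hlam0]; linarith
        · rw [div_le_iff₀ hlam0]; linarith
      have hm := hmb lam hlam δ hδ hδ2 j hj ‖ξ‖ (norm_nonneg _) hloc
      have hρn : ‖(((1 - ρ (‖ξ‖/lam) : ℝ)) : ℂ)‖ ≤ 1 + Mρ := by
        rw [Complex.norm_real, Real.norm_eq_abs]
        exact hCρ _
      calc ‖msym β lam δ j ‖ξ‖‖ * ‖(((1 - ρ (‖ξ‖/lam) : ℝ)) : ℂ)‖
          ≤ (B * lam⁻¹ * p * ((p*(lam+‖ξ‖))⁻¹)^(N+3)) * (1+Mρ) :=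
            mul_le_mul hm hρn (norm_nonneg _) (by positivity)
      _ = (1+Mρ) * B * (lam⁻¹ * p * ((p*(lam+‖ξ‖))⁻¹)^(N+3)) := by ring
      _ ≤ (1+Mρ) * B * (((p*lam)^N)⁻¹ * ((1+‖ξ‖)^3)⁻¹) := by
          apply mul_le_mul_of_nonneg_left
            (arith_aux p lam ‖ξ‖ hj hlam (norm_nonneg _) N) (by positivity)
      _ = ((1+Mρ) * B * R) * ((1+‖ξ‖)^3)⁻¹ := by rw [hRdef]; ring
  -- kernel bound
  have hker : ∀ x : R2, ‖Kker β ρ lam δ j x‖ ≤ C * R := by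
    intro x
    rw [Kker, norm_mul]
    have h9 : (1:ℝ) ≤ ‖(((2*Real.pi)^2 : ℂ))‖ := by
      have he : (((2*Real.pi)^2 : ℂ)) = (((2*Real.pi)^2 : ℝ) : ℂ) := by push_cast; ring
      rw [he, Complex.norm_real, Real.norm_eq_abs, _root_.abs_of_pos (by positivity)]
      nlinarith [Real.pi_gt_three]
    have hpre : ‖((((2*Real.pi)^2 : ℂ)))⁻¹‖ ≤ 1 := by
      rw [norm_inv]
      calc ‖(((2*Real.pi)^2 : ℂ))‖⁻¹ ≤ (1:ℝ)⁻¹ := inv_anti₀ one_pos h9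
      _ = 1 := by norm_num
    have hintle : ‖∫ ξ : R2, msym β lam δ j ‖ξ‖ * ((1 - ρ (‖ξ‖/lam) : ℝ) : ℂ) *
        Complex.exp (Complex.I * ((⟪x,ξ⟫ : ℝ) : ℂ))‖ ≤ ((1+Mρ)*B*R) * Iv := by
      refine le_trans (norm_integral_le_integral_norm _) ?_
      have step := integral_mono_of_nonneg (μ := volume)
        (f := fun ξ : R2 => ‖msym β lam δ j ‖ξ‖ * ((1 - ρ (‖ξ‖/lam) : ℝ) : ℂ) *
          Complex.exp (Complex.I * ((⟪x,ξ⟫ : ℝ) : ℂ))‖)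
        (g := fun ξ : R2 => ((1+Mρ)*B*R) * ((1+‖ξ‖)^3)⁻¹)
        (ae_of_all _ (fun ξ => norm_nonneg _)) (hmaj.const_mul _) (ae_of_all _ (hpt x))
      rw [integral_const_mul] at step
      exact step
    calc ‖((((2*Real.pi)^2 : ℂ)))⁻¹‖ * ‖∫ ξ : R2, msym β lam δ j ‖ξ‖ *
        ((1 - ρ (‖ξ‖/lam) : ℝ) : ℂ) * Complex.exp (Complex.I * ((⟪x,ξ⟫ : ℝ) : ℂ))‖
        ≤ 1 * (((1+Mρ)*B*R) * Iv) :=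
          mul_le_mul hpre hintle (norm_nonneg _) zero_le_one
    _ = ((1+Mρ)*B*Iv) * R := by ring
    _ ≤ C * R := by
        apply mul_le_mul_of_nonneg_right _ hR0.le
        rw [hCdef]
        linarith
  refine ⟨fun x => hker x, ?_⟩
  -- operator bound
  intro f hf
  have hfint : Integrable f volume := memLp_one_iff_integrable.mp hf
  have hbnd : ∀ x : R2, ‖∫ y : R2, Kker β ρ lam δ j (x - y) * f y‖
      ≤ (C * R) * ∫ y : R2, ‖f y‖ := by
    intro x
    refine le_trans (norm_integral_le_integral_norm _) ?_
    have step := integral_mono_of_nonneg (μ := volume)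
      (f := fun y : R2 => ‖Kker β ρ lam δ j (x - y) * f y‖)
      (g := fun y : R2 => (C * R) * ‖f y‖)
      (ae_of_all _ (fun y => norm_nonneg _)) (hfint.norm.const_mul _)
      (ae_of_all _ (fun y => by
        show ‖Kker β ρ lam δ j (x - y) * f y‖ ≤ (C * R) * ‖f y‖
        rw [norm_mul]
        exact mul_le_mul_of_nonneg_right (hker (x - y)) (norm_nonneg _)))
    rw [integral_const_mul] at step
    exact step
  refine le_trans (eLpNorm_le_of_ae_bound (ae_of_all _ hbnd)) ?_
  rw [ENNReal.toReal_top, inv_zero, ENNReal.rpow_zero, one_mul]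
  rw [ENNReal.ofReal_mul (by positivity : (0:ℝ) ≤ C * R)]
  have hfl : ENNReal.ofReal (∫ y : R2, ‖f y‖) = eLpNorm f 1 volume := by
    rw [eLpNorm_one_eq_lintegral_enorm, ofReal_integral_norm_eq_lintegral_enorm hfint]
  rw [hfl]
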